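/- Let û : ℝ≥0 → ℂ⁶ solve the Fourier-transformed 6×6 Timoshenko–Cattaneo system as above and define E₂ = −Re(i·û₁·conj(û₂)). Then ξ·∂ₜE₂ + ξ²(|û₂|² − |û₁|²) + ξ·Re(i·û₂·conj(û₄)) = 0, and consequently ξ·∂ₜE₂ + (1/2)ξ²|û₂|² ≤ ξ²|û₁|² + (1/2)|û₄|² for all t ≥ 0. -/

import Mathlib

open Complex

/-- Dissipation identity and Young-inequality estimate for E₂ = −Re(i·u₁·conj u₂) in the
Fourier-transformed 6×6 Timoshenko–Cattaneo system. -/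
theorem stmt3 (γ ξ a₄ a₅ a₆ : ℝ) (hγ : 0 < γ)
    (ha₄ : a₄ ≠ 0) (ha₅ : a₅ ≠ 0) (ha₆ : a₆ ≠ 0)
    (u : ℝ → Fin 6 → ℂ)
    (hdiff : ∀ j : Fin 6, ∀ t : ℝ, 0 ≤ t → DifferentiableAt ℝ (fun s => u s j) t)
    (h1 : ∀ t : ℝ, 0 ≤ t →
      deriv (fun s => u s 0) t + I * (ξ : ℂ) * u t 1 + u t 3 = 0)
    (h2 : ∀ t : ℝ, 0 ≤ t →
      deriv (fun s => u s 1) t + I * (ξ : ℂ) * u t 0 = 0)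
    (h3 : ∀ t : ℝ, 0 ≤ t →
      deriv (fun s => u s 2) t + I * (ξ : ℂ) * (a₄ : ℂ) * u t 3 = 0)
    (h4 : ∀ t : ℝ, 0 ≤ t →
      deriv (fun s => u s 3) t + I * (ξ : ℂ) * ((a₄ : ℂ) * u t 2 + (a₅ : ℂ) * u t 4)
        - u t 0 = 0)
    (h5 : ∀ t : ℝ, 0 ≤ t →
      deriv (fun s => u s 4) t + I * (ξ : ℂ) * ((a₅ : ℂ) * u t 3 + (a₆ : ℂ) * u t 5) = 0)
    (h6 : ∀ t : ℝ, 0 ≤ t →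
      deriv (fun s => u s 5) t + I * (ξ : ℂ) * (a₆ : ℂ) * u t 4 + (γ : ℂ) * u t 5 = 0) :
    ∀ t : ℝ, 0 ≤ t →
      (ξ * deriv (fun s => -(I * u s 0 * (starRingEnd ℂ) (u s 1)).re) t
        + ξ^2 * (Complex.normSq (u t 1) - Complex.normSq (u t 0))
        + ξ * (I * u t 1 * (starRingEnd ℂ) (u t 3)).re = 0)
      ∧ (ξ * deriv (fun s => -(I * u s 0 * (starRingEnd ℂ) (u s 1)).re) t
          + (1/2) * ξ^2 * Complex.normSq (u t 1)
          ≤ ξ^2 * Complex.normSq (u t 0) + (1/2) * Complex.normSq (u t 3)) := by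

  intro t ht
  have hf := (hdiff 0 t ht).hasDerivAt
  have hg := (hdiff 1 t ht).hasDerivAt
  set f' := deriv (fun s => u s 0) t with hf'
  set g' := deriv (fun s => u s 1) t with hg'
  have hF : HasDerivAt (fun s => I * u s 0 * (starRingEnd ℂ) (u s 1))
      (I * f' * (starRingEnd ℂ) (u t 1) + I * u t 0 * (starRingEnd ℂ) g') t := by
    have h1' : HasDerivAt (fun s => I * u s 0) (I * f') t := hf.const_mul I
    have h2' : HasDerivAt (fun s => (starRingEnd ℂ) (u s 1)) ((starRingEnd ℂ) g') t :=
      hg.star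
    simpa [Pi.mul_def, mul_comm, mul_left_comm, mul_assoc] using h1'.mul h2'
  have hRe : HasDerivAt (fun s => -(I * u s 0 * (starRingEnd ℂ) (u s 1)).re)
      (-(I * f' * (starRingEnd ℂ) (u t 1) + I * u t 0 * (starRingEnd ℂ) g').re) t :=
    (Complex.reCLM.hasFDerivAt.comp_hasDerivAt t hF).neg
  have hD : deriv (fun s => -(I * u s 0 * (starRingEnd ℂ) (u s 1)).re) t
      = -(I * f' * (starRingEnd ℂ) (u t 1) + I * u t 0 * (starRingEnd ℂ) g').re :=
    hRe.deriv
  have e1 : f' = -(I * (ξ : ℂ) * u t 1) - u t 3 := by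
    have := h1 t ht; rw [← hf'] at this; linear_combination this
  have e2 : g' = -(I * (ξ : ℂ) * u t 0) := by
    have := h2 t ht; rw [← hg'] at this; linear_combination this
  have key : ξ * deriv (fun s => -(I * u s 0 * (starRingEnd ℂ) (u s 1)).re) t
        + ξ^2 * (Complex.normSq (u t 1) - Complex.normSq (u t 0))
        + ξ * (I * u t 1 * (starRingEnd ℂ) (u t 3)).re = 0 := by
    rw [hD, e1, e2]
    simp only [Complex.normSq_apply, Complex.add_re, Complex.mul_re, Complex.mul_im,
      Complex.neg_re, Complex.neg_im, Complex.sub_re, Complex.sub_im, Complex.I_re,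
      Complex.I_im, Complex.conj_re, Complex.conj_im, Complex.ofReal_re, Complex.ofReal_im]
    ring
  refine ⟨key, ?_⟩
  have habs : |ξ * (I * u t 1 * (starRingEnd ℂ) (u t 3)).re|
      ≤ |ξ| * ‖u t 1‖ * ‖u t 3‖ := by
    rw [abs_mul]
    have hh : |(I * u t 1 * (starRingEnd ℂ) (u t 3)).re|
        ≤ ‖u t 1‖ * ‖u t 3‖ := by
      calc |(I * u t 1 * (starRingEnd ℂ) (u t 3)).re|
          ≤ ‖I * u t 1 * (starRingEnd ℂ) (u t 3)‖ := Complex.abs_re_le_norm _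
        _ = ‖u t 1‖ * ‖u t 3‖ := by simp [norm_mul]
    calc |ξ| * |(I * u t 1 * (starRingEnd ℂ) (u t 3)).re|
        ≤ |ξ| * (‖u t 1‖ * ‖u t 3‖) :=
          mul_le_mul_of_nonneg_left hh (abs_nonneg _)
      _ = |ξ| * ‖u t 1‖ * ‖u t 3‖ := (mul_assoc _ _ _).symm
  have hsq1 : (|ξ| * ‖u t 1‖)^2 = ξ^2 * Complex.normSq (u t 1) := by
    rw [mul_pow, _root_.sq_abs, Complex.sq_norm]
  have hsq2 : (‖u t 3‖)^2 = Complex.normSq (u t 3) := Complex.sq_norm _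
  nlinarith [sq_nonneg (|ξ| * ‖u t 1‖ - ‖u t 3‖),
    abs_nonneg (ξ * (I * u t 1 * (starRingEnd ℂ) (u t 3)).re),
    neg_abs_le (ξ * (I * u t 1 * (starRingEnd ℂ) (u t 3)).re), key]
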